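/- Let A be a real N×N matrix and b_0, b_1, …, b_p ∈ ℝ^N. Define w : ℝ → ℝ^N by w(τ) = Σ_{j=0}^{p} τ^j φ_j(τA) b_j. Then w is differentiable, w(0) = b_0, and for all τ ∈ ℝ, w'(τ) = A w(τ) + b_1 + τ b_2 + … + (τ^{p−1}/(p−1)!) b_p = A w(τ) + Σ_{j=1}^{p} (τ^{j−1}/(j−1)!) b_j. -/

import Mathlib

open Matrix MeasureTheory
open scoped Nat

section AuxLinfty

attribute [local instance] Matrix.linftyOpNormedRing Matrix.linftyOpNormedAlgebra

theorem aux_exp_cont {n : ℕ} :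
    Continuous (NormedSpace.exp : Matrix (Fin n) (Fin n) ℝ → Matrix (Fin n) (Fin n) ℝ) :=
  NormedSpace.exp_continuous

theorem aux_exp_slope {n : ℕ} (A : Matrix (Fin n) (Fin n) ℝ) (t : ℝ) :
    Filter.Tendsto (slope (fun u : ℝ => NormedSpace.exp (u • A)) t) (nhdsWithin t {t}ᶜ)
      (nhds (A * NormedSpace.exp (t • A))) :=
  hasDerivAt_iff_tendsto_slope.mp (hasDerivAt_exp_smul_const' A t)

end AuxLinfty

attribute [local instance] Matrix.normedAddCommGroup Matrix.normedSpace

/-- The matrix `φ`-functions: `φ₀(M) = e^M` and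
`φ_k(M) = ∫_0^1 e^{(1-θ)M} θ^{k-1}/(k-1)! dθ` for `k ≥ 1`. -/
noncomputable def phi {n : ℕ} (k : ℕ) (M : Matrix (Fin n) (Fin n) ℝ) :
    Matrix (Fin n) (Fin n) ℝ :=
  if k = 0 then NormedSpace.exp M
  else ∫ θ in (0:ℝ)..1, ((θ ^ (k - 1) / (k - 1)! : ℝ)) • NormedSpace.exp ((1 - θ) • M)

namespace StmtNineAux

variable {n : ℕ}

theorem exp_hasDerivAt (A : Matrix (Fin n) (Fin n) ℝ) (τ : ℝ) :
    HasDerivAt (fun t : ℝ => NormedSpace.exp (t • A)) (A * NormedSpace.exp (τ • A)) τ :=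
  hasDerivAt_iff_tendsto_slope.mpr (aux_exp_slope A τ)

/-- `M ↦ M *ᵥ v` as a continuous linear map. -/
noncomputable def mulVecCLM (v : Fin n → ℝ) :
    Matrix (Fin n) (Fin n) ℝ →L[ℝ] (Fin n → ℝ) :=
  LinearMap.toContinuousLinearMap
    { toFun := fun M => M.mulVec v
      map_add' := fun M M' => Matrix.add_mulVec M M' v
      map_smul' := fun c M => Matrix.smul_mulVec c M v }

@[simp] theorem mulVecCLM_apply (v : Fin n → ℝ) (M : Matrix (Fin n) (Fin n) ℝ) :
    mulVecCLM v M = M.mulVec v := rfl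

/-- Left multiplication as a continuous linear map. -/
noncomputable def mulCLM (M : Matrix (Fin n) (Fin n) ℝ) :
    Matrix (Fin n) (Fin n) ℝ →L[ℝ] Matrix (Fin n) (Fin n) ℝ :=
  LinearMap.toContinuousLinearMap (LinearMap.mulLeft ℝ M)

@[simp] theorem mulCLM_apply (M X : Matrix (Fin n) (Fin n) ℝ) :
    mulCLM M X = M * X := rfl

/-- Multiplication as a continuous bilinear map. -/
noncomputable def mulB :
    Matrix (Fin n) (Fin n) ℝ →L[ℝ] Matrix (Fin n) (Fin n) ℝ →L[ℝ] Matrix (Fin n) (Fin n) ℝ :=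
  LinearMap.toContinuousLinearMap
    { toFun := fun M => mulCLM M
      map_add' := by intro M M'; ext X; simp [add_mul]
      map_smul' := by intro c M; ext X; simp [smul_mul_assoc] }

@[simp] theorem mulB_apply (M X : Matrix (Fin n) (Fin n) ℝ) :
    (mulB M) X = M * X := rfl

theorem cont_integrand (A : Matrix (Fin n) (Fin n) ℝ) (j : ℕ) :
    Continuous (fun s : ℝ => (s ^ j / (j ! : ℝ)) • NormedSpace.exp ((-s) • A)) :=
  ((continuous_pow j).div_const _).smul
    (aux_exp_cont.comp ((continuous_neg).smul continuous_const))

theorem cont_integrand' (A : Matrix (Fin n) (Fin n) ℝ) (j : ℕ) (τ : ℝ) :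
    Continuous (fun θ : ℝ => (θ ^ j / (j ! : ℝ)) • NormedSpace.exp ((-(τ * θ)) • A)) :=
  ((continuous_pow j).div_const _).smul
    (aux_exp_cont.comp (((continuous_const.mul continuous_id).neg).smul continuous_const))

theorem exp_mul_exp_neg (A : Matrix (Fin n) (Fin n) ℝ) (τ : ℝ) :
    NormedSpace.exp (τ • A) * NormedSpace.exp ((-τ) • A) = 1 := by
  rw [← Matrix.exp_add_of_commute _ _ (((Commute.refl A).smul_left τ).smul_right (-τ))]
  rw [show τ • A + (-τ) • A = 0 by module, NormedSpace.exp_zero]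

theorem key (A : Matrix (Fin n) (Fin n) ℝ) (j : ℕ) (τ : ℝ) :
    τ ^ (j + 1) • phi (j + 1) (τ • A) =
      NormedSpace.exp (τ • A) *
        ∫ s in (0:ℝ)..τ, (s ^ j / (j ! : ℝ)) • NormedSpace.exp ((-s) • A) := by
  have h1 : phi (j + 1) (τ • A) =
      NormedSpace.exp (τ • A) *
        ∫ θ in (0:ℝ)..1, (θ ^ j / (j ! : ℝ)) • NormedSpace.exp ((-(τ * θ)) • A) := by
    rw [phi, if_neg (Nat.succ_ne_zero j)]
    simp only [Nat.add_sub_cancel]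
    have e1 : ∀ θ : ℝ, (θ ^ j / (j ! : ℝ)) • NormedSpace.exp ((1 - θ) • (τ • A)) =
        mulCLM (NormedSpace.exp (τ • A))
          ((θ ^ j / (j ! : ℝ)) • NormedSpace.exp ((-(τ * θ)) • A)) := by
      intro θ
      have h2 : (1 - θ) • (τ • A) = τ • A + (-(τ * θ)) • A := by
        rw [smul_smul, show (1 - θ) * τ = τ + -(τ * θ) by ring, add_smul]
      rw [mulCLM_apply, h2,
        Matrix.exp_add_of_commute _ _ (((Commute.refl A).smul_left τ).smul_right _),
        mul_smul_comm]
    simp only [e1]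
    exact (ContinuousLinearMap.intervalIntegral_comp_comm (mulCLM (NormedSpace.exp (τ • A)))
      ((cont_integrand' A j τ).intervalIntegrable 0 1)).trans (mulCLM_apply _ _)
  rw [h1, ← mul_smul_comm]
  congr 1
  have h3 := intervalIntegral.smul_integral_comp_mul_left
    (fun s => (s ^ j / (j ! : ℝ)) • NormedSpace.exp ((-s) • A)) τ (a := 0) (b := 1)
  simp only [mul_zero, mul_one] at h3
  rw [← h3, show τ ^ (j + 1) = τ * τ ^ j by ring, mul_smul]
  congr 1
  rw [← intervalIntegral.integral_smul]
  congr 1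
  funext θ
  rw [smul_smul]
  congr 1
  field_simp
  ring

end StmtNineAux

open StmtNineAux in
theorem stmt9 {N p : ℕ} (A : Matrix (Fin N) (Fin N) ℝ) (b : ℕ → Fin N → ℝ)
    (w : ℝ → Fin N → ℝ)
    (hw : ∀ t : ℝ, w t = ∑ j ∈ Finset.range (p + 1),
        t ^ j • (phi j (t • A)).mulVec (b j)) :
    w 0 = b 0 ∧
      ∀ τ : ℝ,
        HasDerivAt w
          (A.mulVec (w τ) + ∑ j ∈ Finset.range p, (τ ^ j / (j ! : ℝ)) • b (j + 1))
          τ := by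
  have hwfun : w = fun t => ∑ j ∈ Finset.range (p + 1),
      t ^ j • (phi j (t • A)).mulVec (b j) := funext hw
  constructor
  · rw [hw 0, Finset.sum_range_succ']
    simp [phi, NormedSpace.exp_zero, Matrix.one_mulVec]
  · intro τ
    -- the integrand and its primitive
    set f : ℕ → ℝ → Matrix (Fin N) (Fin N) ℝ :=
      fun j s => (s ^ j / (j ! : ℝ)) • NormedSpace.exp ((-s) • A) with hf
    set g : ℕ → ℝ → Matrix (Fin N) (Fin N) ℝ :=
      fun j t => ∫ s in (0:ℝ)..t, f j s with hg
    have hgderiv : ∀ (j : ℕ) (t : ℝ), HasDerivAt (g j) (f j t) t := by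
      intro j t
      exact intervalIntegral.integral_hasDerivAt_right
        ((cont_integrand A j).intervalIntegrable 0 t)
        (by
          have : TopologicalSpace.PseudoMetrizableSpace (Matrix (Fin N) (Fin N) ℝ) :=
            inferInstanceAs (TopologicalSpace.PseudoMetrizableSpace (Fin N → Fin N → ℝ))
          exact (cont_integrand A j).stronglyMeasurableAtFilter _ _)
        (cont_integrand A j).continuousAt
    -- per-term derivatives
    have hterm : ∀ j ∈ Finset.range (p + 1),
        HasDerivAt (fun t => t ^ j • (phi j (t • A)).mulVec (b j))
          (A.mulVec (τ ^ j • (phi j (τ • A)).mulVec (b j)) +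
            if j = 0 then 0 else (τ ^ (j - 1) / ((j - 1)! : ℝ)) • b j) τ := by
      intro j _
      match j with
      | 0 =>
        have h0 : (fun t : ℝ => t ^ 0 • (phi 0 (t • A)).mulVec (b 0)) =
            fun t => mulVecCLM (b 0) (NormedSpace.exp (t • A)) := by
          funext t; simp [phi]
        rw [h0]
        have hd := (mulVecCLM (b 0)).hasFDerivAt.comp_hasDerivAt τ (exp_hasDerivAt A τ)
        convert hd using 1
        · rfl
        · rfl
        · rfl
        · rfl
        simp [phi, ← Matrix.mulVec_mulVec]
        exact Matrix.mulVec_mulVec _ _ _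
      | (j + 1) =>
        have h0 : (fun t : ℝ => t ^ (j + 1) • (phi (j + 1) (t • A)).mulVec (b (j + 1))) =
            fun t => mulVecCLM (b (j + 1)) (NormedSpace.exp (t • A) * g j t) := by
          funext t
          rw [mulVecCLM_apply, ← key A j t, Matrix.smul_mulVec]
        rw [h0]
        have hprod := mulB.hasDerivAt_of_bilinear (fun _ => exp_hasDerivAt A τ) (fun _ => hgderiv j τ)
        have hd := (mulVecCLM (b (j + 1))).hasFDerivAt.comp_hasDerivAt τ hprod
        convert hd using 1
        · rfl
        · rfl
        · rfl
        · rfl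
        have hE1 : NormedSpace.exp (τ • A) * f j τ = (τ ^ j / (j ! : ℝ)) • 1 := by
          rw [hf, mul_smul_comm, exp_mul_exp_neg]
        change _ = (NormedSpace.exp (τ • A) * f j τ + A * NormedSpace.exp (τ • A) * g j τ).mulVec
          (b (j + 1))
        rw [Matrix.add_mulVec]
        rw [hE1, Matrix.smul_mulVec, Matrix.one_mulVec,
          mul_assoc, ← Matrix.mulVec_mulVec, ← key A j τ, Matrix.smul_mulVec]
        simp [add_comm]
    have hsum := HasDerivAt.sum hterm
    rw [hwfun]
    convert hsum using 1
    · rfl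
    · rfl
    · rfl
    · ext t
      simp [Finset.sum_apply]
    rw [Finset.sum_range_succ' (fun j => A.mulVec (τ ^ j • (phi j (τ • A)).mulVec (b j)) +
      if j = 0 then 0 else (τ ^ (j - 1) / ((j - 1)! : ℝ)) • b j) p]
    simp only [Nat.succ_ne_zero, if_false, if_pos rfl, Nat.add_sub_cancel, add_zero]
    rw [Finset.sum_range_succ' (fun j => τ ^ j • (phi j (τ • A)).mulVec (b j)) p,
      Matrix.mulVec_add, Finset.sum_add_distrib]
    rw [show A.mulVec (∑ j ∈ Finset.range p, τ ^ (j + 1) • (phi (j + 1) (τ • A)).mulVec (b (j + 1)))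
        = ∑ j ∈ Finset.range p, A.mulVec (τ ^ (j + 1) • (phi (j + 1) (τ • A)).mulVec (b (j + 1)))
      from map_sum A.mulVecLin _ _]
    simp only [if_true, add_zero]
    abel
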